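/- arXiv:1308.6397 — 4 statements merged into one kernel-verified Lean document; each statement's English description precedes it below -/
import Mathlib

section
/- For every starting point s ≥ 1 and x > 0, the hitting time M of the Markov chain is finite almost surely: P_{(s,x)}(M < ∞) = 1. -/
open MeasureTheory ProbabilityTheory Real Filter Topology

/-- `tProc E k ω = t_k(ω)`: `t_1 = 0`, `t_{k+1} = t_k + E_k` for `k ≥ 1`. -/
noncomputable def tProc {Ω : Type*} (E : ℕ → Ω → ℝ) (k : ℕ) (ω : Ω) : ℝ :=
  ∑ i ∈ Finset.Ico 1 k, E i ω

/-- `zProc E Y k ω = z_k(ω)`: `z_1 = 1`, `z_{k+1} = z_k + Y_k e^{t_k}` for `k ≥ 1`. -/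
noncomputable def zProc {Ω : Type*} (E Y : ℕ → Ω → ℝ) (k : ℕ) (ω : Ω) : ℝ :=
  1 + ∑ i ∈ Finset.Ico 1 k, Y i ω * Real.exp (tProc E i ω)

/-- The sequences `(E_k)` and `(Y_k)` are mutually independent and i.i.d.,
each exponentially distributed with rate 1. -/
def IsClusterSetup {Ω : Type*} [MeasurableSpace Ω] (P : Measure Ω)
    (E Y : ℕ → Ω → ℝ) : Prop :=
  iIndepFun
      (fun p : Bool × ℕ => cond p.1 (E p.2) (Y p.2)) P ∧
    (∀ k, Measure.map (E k) P = expMeasure 1) ∧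
    (∀ k, Measure.map (Y k) P = expMeasure 1)

/-- `𝒩 := sup {i ≥ 1 : t_i ≤ log z_i}` (as a natural number; junk value `0` on the
null event where the set is unbounded). -/
noncomputable def Nrv {Ω : Type*} (E Y : ℕ → Ω → ℝ) (ω : Ω) : ℕ :=
  sSup {i : ℕ | 1 ≤ i ∧ tProc E i ω ≤ Real.log (zProc E Y i ω)}

/-- `F := log z_{𝒩 + 1}`. -/
noncomputable def Frv {Ω : Type*} (E Y : ℕ → Ω → ℝ) (ω : Ω) : ℝ :=
  Real.log (zProc E Y (Nrv E Y ω + 1) ω)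

/-- `uFun a b z = ∫_0^∞ e^{-zt} t^{a-1} (1+t)^{b-a-1} dt`. -/
noncomputable def uFun (a b z : ℝ) : ℝ :=
  ∫ t in Set.Ioi (0:ℝ), Real.exp (-z * t) * t ^ (a - 1) * (1 + t) ^ (b - a - 1)

/-- The confluent hypergeometric function of the second kind (integral representation,
valid for `a > 0`): `Ψ(a, b; z) = Γ(a)⁻¹ ∫_0^∞ e^{-zt} t^{a-1} (1+t)^{b-a-1} dt`. -/
noncomputable def Psi (a b z : ℝ) : ℝ :=
  (Real.Gamma a)⁻¹ * uFun a b z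

/-- The sequences `(α_k)` (rate-1 exponentials) and `(φ_k)` (uniform on `[0,1]`)
are i.i.d. and mutually independent. -/
def IsChainSetup {Ω : Type*} [MeasurableSpace Ω] (P : Measure Ω)
    (a f : ℕ → Ω → ℝ) : Prop :=
  iIndepFun
      (fun p : Bool × ℕ => cond p.1 (a p.2) (f p.2)) P ∧
    (∀ k, Measure.map (a k) P = expMeasure 1) ∧
    (∀ k, Measure.map (f k) P = volume.restrict (Set.Icc (0:ℝ) 1))

/-- `s_0 := s`, `s_{k+1} := (s_k + α_k) φ_k`. -/
noncomputable def sChain {Ω : Type*} (a f : ℕ → Ω → ℝ) (s : ℝ) (ω : Ω) : ℕ → ℝ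
  | 0 => s
  | k + 1 => (sChain a f s ω k + a k ω) * f k ω

/-- `x_0 := x`, `x_{k+1} := x_k (1 + α_k / s_k)`. -/
noncomputable def xChain {Ω : Type*} (a f : ℕ → Ω → ℝ) (s x : ℝ) (ω : Ω) : ℕ → ℝ
  | 0 => x
  | k + 1 => xChain a f s x ω k * (1 + a k ω / sChain a f s ω k)

/-- `M := min {i > 1 : s_i < 1}` (junk value `0` if no such `i` exists). -/
noncomputable def Mhit {Ω : Type*} (a f : ℕ → Ω → ℝ) (s : ℝ) (ω : Ω) : ℕ :=
  sInf {i : ℕ | 1 < i ∧ sChain a f s ω i < 1}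

section Aux11

variable {Ω : Type*} [MeasurableSpace Ω] {P : Measure Ω}


variable {Ω : Type*} [MeasurableSpace Ω] {P : Measure Ω}

lemma aux_iIndepFun_congr {ι β : Type*} {m : MeasurableSpace β} {F G : ι → Ω → β}
    (h : iIndepFun (m := fun _ => m) F P) (hFG : ∀ i, F i =ᵐ[P] G i) :
    iIndepFun (m := fun _ => m) G P := by
  rw [iIndepFun_iff_measure_inter_preimage_eq_mul] at h ⊢
  intro S sets hsets
  have hae : ∀ᵐ ω ∂P, ∀ i ∈ S, F i ω = G i ω := by
    refine (ae_ball_iff S.countable_toSet).2 ?_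
    exact fun i _ => hFG i
  have h1 : (⋂ i ∈ S, G i ⁻¹' sets i) =ᵐ[P] (⋂ i ∈ S, F i ⁻¹' sets i) := by
    rw [Filter.eventuallyEq_set]
    filter_upwards [hae] with ω hω
    simp only [Set.mem_iInter, Set.mem_preimage]
    exact ⟨fun h' i hi => by rw [hω i hi]; exact h' i hi,
           fun h' i hi => by rw [← hω i hi]; exact h' i hi⟩
  rw [measure_congr h1, h S hsets]
  refine Finset.prod_congr rfl fun i _ => measure_congr ?_
  rw [Filter.eventuallyEq_set]
  filter_upwards [hFG i] with ω hω
  simp [Set.mem_preimage, hω]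

lemma aux_lintegral_prod {ι : Type*} [IsProbabilityMeasure P] {G : ι → Ω → ENNReal}
    (h : iIndepFun G P) (hm : ∀ i, Measurable (G i)) :
    ∀ S : Finset ι, ∫⁻ ω, ∏ p ∈ S, G p ω ∂P = ∏ p ∈ S, ∫⁻ ω, G p ω ∂P := by
  classical
  intro S
  induction S using Finset.cons_induction with
  | empty => simp
  | cons q S hq ih =>
    have hind : IndepFun (∏ j ∈ S, G j) (G q) P :=
      h.indepFun_finset_prod_of_notMem hm hq
    have hmS : Measurable (∏ j ∈ S, G j) := by
      have h' := Finset.measurable_prod S (fun i _ => hm i)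
      have : (∏ j ∈ S, G j) = fun a => ∏ i ∈ S, G i a := by
        funext a; simp [Finset.prod_apply]
      rw [this]; exact h'
    calc ∫⁻ ω, ∏ p ∈ Finset.cons q S hq, G p ω ∂P
        = ∫⁻ ω, (∏ p ∈ S, G p ω) * G q ω ∂P := by
          refine lintegral_congr fun ω => ?_
          rw [Finset.prod_cons, mul_comm]
      _ = (∫⁻ ω, ∏ p ∈ S, G p ω ∂P) * ∫⁻ ω, G q ω ∂P := by
          have := lintegral_mul_eq_lintegral_mul_lintegral_of_indepFun''
            (μ := P) hmS.aemeasurable (hm q).aemeasurable hind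
          simpa [Finset.prod_apply] using this
      _ = ∏ p ∈ Finset.cons q S hq, ∫⁻ ω, G p ω ∂P := by
          rw [Finset.prod_cons, ih, mul_comm]

lemma aux_sqrt_prod {ι : Type*} (c : ι → ℝ) :
    ∀ (S : Finset ι), (∀ i ∈ S, 0 ≤ c i) →
      Real.sqrt (∏ i ∈ S, c i) = ∏ i ∈ S, Real.sqrt (c i) := by
  classical
  intro S
  induction S using Finset.cons_induction with
  | empty => intro _; simp
  | cons q S hq ih =>
    intro h
    rw [Finset.prod_cons, Finset.prod_cons,
      Real.sqrt_mul (h q (Finset.mem_cons_self _ _)),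
      ih (fun i hi => h i (Finset.mem_cons_of_mem hi))]

lemma aux_prod_SF {M : Type*} [CommMonoid M] (H : Bool × ℕ → M) (m : ℕ) :
    ∏ p ∈ insert ((true : Bool), (0:ℕ))
        ((Finset.Ico 1 m).image (fun i => ((true:Bool), i)) ∪
          (Finset.Ico 1 m).image (fun i => ((false:Bool), i))), H p
      = H (true, 0) *
        ((∏ i ∈ Finset.Ico 1 m, H (true, i)) * ∏ i ∈ Finset.Ico 1 m, H (false, i)) := by
  rw [Finset.prod_insert, Finset.prod_union, Finset.prod_image, Finset.prod_image]
  · intro i _ j _ hij; simpa using hij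
  · intro i _ j _ hij; simpa using hij
  · rw [Finset.disjoint_left]
    rintro p hp1 hp2
    simp only [Finset.mem_image] at hp1 hp2
    obtain ⟨i, _, rfl⟩ := hp1
    obtain ⟨j, _, hj⟩ := hp2
    simp at hj
  · simp only [Finset.mem_union, Finset.mem_image, Finset.mem_Ico]
    rintro (⟨i, hi, hij⟩ | ⟨i, hi, hij⟩) <;> simp_all

end Aux11


lemma aux_lint_exp_zero :
    ∫⁻ x in Set.Ioi (0:ℝ), ENNReal.ofReal (Real.exp (-x)) = 1 := by
  have hint : IntegrableOn (fun x => Real.exp (-x)) (Set.Ioi (0:ℝ)) := by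
    have h := Real.GammaIntegral_convergent (s := 1) one_pos
    have he : (fun x : ℝ => Real.exp (-x) * x ^ ((1:ℝ) - 1)) = fun x => Real.exp (-x) := by
      funext x; rw [sub_self, Real.rpow_zero, mul_one]
    rwa [he] at h
  rw [← ofReal_integral_eq_lintegral_ofReal hint
    (Filter.Eventually.of_forall fun x => (Real.exp_pos _).le)]
  have hv : ∫ x in Set.Ioi (0:ℝ), Real.exp (-x) = 1 := by
    have h := (Real.Gamma_eq_integral one_pos).symm
    have he : (fun x : ℝ => Real.exp (-x) * x ^ ((1:ℝ) - 1)) = fun x => Real.exp (-x) := by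
      funext x; rw [sub_self, Real.rpow_zero, mul_one]
    rw [he] at h
    rw [h, Real.Gamma_one]
  rw [hv]; simp

lemma aux_lint_exp_one :
    ∫⁻ x in Set.Ioi (0:ℝ), ENNReal.ofReal (Real.exp (-x)) * ENNReal.ofReal x = 1 := by
  have he : (fun x : ℝ => Real.exp (-x) * x ^ ((2:ℝ) - 1)) = fun x => Real.exp (-x) * x := by
    funext x; norm_num
  have hint : IntegrableOn (fun x => Real.exp (-x) * x) (Set.Ioi (0:ℝ)) := by
    have h := Real.GammaIntegral_convergent (s := 2) two_pos
    rwa [he] at h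
  have hnn : 0 ≤ᵐ[volume.restrict (Set.Ioi (0:ℝ))] fun x => Real.exp (-x) * x :=
    ae_restrict_of_forall_mem measurableSet_Ioi fun x hx =>
      mul_nonneg (Real.exp_pos _).le (le_of_lt hx)
  have h1 : ∫⁻ x in Set.Ioi (0:ℝ), ENNReal.ofReal (Real.exp (-x)) * ENNReal.ofReal x
      = ∫⁻ x in Set.Ioi (0:ℝ), ENNReal.ofReal (Real.exp (-x) * x) := by
    refine lintegral_congr fun x => ?_
    rw [ENNReal.ofReal_mul (Real.exp_pos _).le]
  rw [h1, ← ofReal_integral_eq_lintegral_ofReal hint hnn]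
  have hv : ∫ x in Set.Ioi (0:ℝ), Real.exp (-x) * x = 1 := by
    have h := (Real.Gamma_eq_integral two_pos).symm
    rw [he] at h
    rw [h, Real.Gamma_two]
  rw [hv]; simp

lemma aux_lint_expPDF (g : ℝ → ENNReal) :
    ∫⁻ x, exponentialPDF 1 x * g x ∂volume
      = ∫⁻ x in Set.Ioi (0:ℝ), ENNReal.ofReal (Real.exp (-x)) * g x ∂volume := by
  rw [← lintegral_indicator measurableSet_Ioi]
  refine lintegral_congr_ae ?_
  have h0 : ∀ᵐ (x : ℝ) ∂volume, x ≠ 0 := by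
    refine ae_iff.2 ?_
    simp only [ne_eq, not_not]
    have : {x : ℝ | x = 0} = {(0:ℝ)} := by ext; simp
    rw [this]; exact measure_singleton 0
  filter_upwards [h0] with x hx
  rcases lt_or_gt_of_ne hx with h | h
  · rw [Set.indicator_of_notMem (by simp [h.le, not_lt.2 h.le]), exponentialPDF_eq,
      if_neg (not_le.2 h)]
    simp
  · rw [Set.indicator_of_mem (Set.mem_Ioi.2 h), exponentialPDF_eq, if_pos h.le]
    norm_num

lemma aux_measurable_expPDF : Measurable (exponentialPDF 1) := by
  have : exponentialPDF 1 = fun x => ENNReal.ofReal (exponentialPDFReal 1 x) := rfl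
  rw [this]
  exact ENNReal.measurable_ofReal.comp (measurable_exponentialPDFReal 1)

lemma aux_exp_moment (c b : ℝ) (hc : 0 ≤ c) (hb : 0 ≤ b) :
    ∫⁻ x, ENNReal.ofReal (c + b * x) ∂(expMeasure 1) = ENNReal.ofReal (c + b) := by
  have hg : Measurable fun x : ℝ => ENNReal.ofReal (c + b * x) := by fun_prop
  rw [show expMeasure 1 = volume.withDensity (exponentialPDF 1) from rfl,
    lintegral_withDensity_eq_lintegral_mul volume aux_measurable_expPDF hg]
  have hpm : (fun x => (exponentialPDF 1 * fun x => ENNReal.ofReal (c + b * x)) x)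
      = fun x => exponentialPDF 1 x * ENNReal.ofReal (c + b * x) := rfl
  rw [hpm, aux_lint_expPDF]
  calc ∫⁻ x in Set.Ioi (0:ℝ), ENNReal.ofReal (Real.exp (-x)) * ENNReal.ofReal (c + b * x)
      = ∫⁻ x in Set.Ioi (0:ℝ), (ENNReal.ofReal c * ENNReal.ofReal (Real.exp (-x))
          + ENNReal.ofReal b * (ENNReal.ofReal (Real.exp (-x)) * ENNReal.ofReal x)) := by
        refine setLIntegral_congr_fun measurableSet_Ioi
          (fun x hx => ?_)
        rw [ENNReal.ofReal_add hc (mul_nonneg hb hx.le), ENNReal.ofReal_mul hb]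
        ring
    _ = ENNReal.ofReal c * (∫⁻ x in Set.Ioi (0:ℝ), ENNReal.ofReal (Real.exp (-x)))
          + ENNReal.ofReal b *
            ∫⁻ x in Set.Ioi (0:ℝ), ENNReal.ofReal (Real.exp (-x)) * ENNReal.ofReal x := by
        rw [lintegral_add_left (by fun_prop), lintegral_const_mul _ (by fun_prop),
          lintegral_const_mul _ (by fun_prop)]
    _ = ENNReal.ofReal c + ENNReal.ofReal b := by
        rw [aux_lint_exp_zero, aux_lint_exp_one, mul_one, mul_one]
    _ = ENNReal.ofReal (c + b) := (ENNReal.ofReal_add hc hb).symm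

lemma aux_unif : ∫⁻ x, ENNReal.ofReal (Real.sqrt x) ∂(volume.restrict (Set.Icc (0:ℝ) 1))
    = ENNReal.ofReal (2/3) := by
  have hint : Integrable (fun x => Real.sqrt x) (volume.restrict (Set.Icc (0:ℝ) 1)) :=
    Real.continuous_sqrt.integrableOn_Icc
  rw [← ofReal_integral_eq_lintegral_ofReal hint
    (Filter.Eventually.of_forall fun x => Real.sqrt_nonneg x)]
  congr 1
  have h1 : volume.restrict (Set.Icc (0:ℝ) 1) = volume.restrict (Set.Ioc (0:ℝ) 1) :=
    (Measure.restrict_congr_set MeasureTheory.Ioc_ae_eq_Icc).symm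
  rw [h1, ← intervalIntegral.integral_of_le (zero_le_one)]
  rw [intervalIntegral.integral_congr (g := fun x => x ^ ((1:ℝ)/2))
    (fun x _ => Real.sqrt_eq_rpow x)]
  rw [integral_rpow (Or.inl (by norm_num))]
  rw [Real.one_rpow, Real.zero_rpow (by norm_num)]
  norm_num

lemma aux_ae_exp_nonneg : ∀ᵐ x ∂(expMeasure 1), 0 ≤ x := by
  rw [ae_iff]
  have h : {x : ℝ | ¬ 0 ≤ x} = Set.Iio 0 := by ext; simp
  rw [h, show expMeasure 1 = volume.withDensity (exponentialPDF 1) from rfl,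
    withDensity_apply _ measurableSet_Iio]
  exact lintegral_exponentialPDF_of_nonpos le_rfl

lemma aux_sqrt_le_am (x : ℝ) (hx : 0 ≤ x) : Real.sqrt x ≤ (1 + x) / 2 := by
  nlinarith [Real.sq_sqrt hx, Real.sqrt_nonneg x, sq_nonneg (Real.sqrt x - 1)]

lemma aux_sqrt_one_add (x : ℝ) (hx : 0 ≤ x) :
    Real.sqrt (1 + x) ≤ 3 / (2 * Real.sqrt 2) + (1 / (2 * Real.sqrt 2)) * x := by
  have h2 : Real.sqrt 2 * Real.sqrt 2 = 2 := Real.mul_self_sqrt (by norm_num)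
  have h2p : 0 < Real.sqrt 2 := Real.sqrt_pos.2 (by norm_num)
  have heq : 3 / (2 * Real.sqrt 2) + (1 / (2 * Real.sqrt 2)) * x
      = (3 + x) / (2 * Real.sqrt 2) := by field_simp
  rw [heq]
  have hnn : 0 ≤ (3 + x) / (2 * Real.sqrt 2) := by positivity
  calc Real.sqrt (1 + x) ≤ Real.sqrt (((3 + x) / (2 * Real.sqrt 2)) ^ 2) := by
        refine Real.sqrt_le_sqrt ?_
        rw [div_pow, mul_pow]
        rw [show Real.sqrt 2 ^ 2 = 2 by rw [sq, h2]]
        rw [le_div_iff₀ (by norm_num)]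
        nlinarith [sq_nonneg (x - 1)]
    _ = (3 + x) / (2 * Real.sqrt 2) := Real.sqrt_sq hnn

lemma aux_coef_eq : 3 / (2 * Real.sqrt 2) + 1 / (2 * Real.sqrt 2) = Real.sqrt 2 := by
  have h2 : Real.sqrt 2 * Real.sqrt 2 = 2 := Real.mul_self_sqrt (by norm_num)
  have h2p : 0 < Real.sqrt 2 := Real.sqrt_pos.2 (by norm_num)
  field_simp
  nlinarith [h2]

lemma aux_det (α φ : ℕ → ℝ) (s : ℝ) (hs : 1 ≤ s) (ha : ∀ k, 0 ≤ α k)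
    (hf0 : ∀ k, 0 ≤ φ k) (hf1 : ∀ k, φ k ≤ 1) (S : ℕ → ℝ) (hS0 : S 0 = s)
    (hrec : ∀ k, S (k + 1) = (S k + α k) * φ k) (n : ℕ) (hn : 2 ≤ n)
    (hA : ∀ i, 2 ≤ i → i ≤ n → 1 ≤ S i) :
    1 ≤ Real.sqrt (s + 1 + α 0) *
      ((∏ i ∈ Finset.Ico 1 n, Real.sqrt (1 + α i)) *
        ∏ i ∈ Finset.Ico 1 n, Real.sqrt (φ i)) := by
  set B : ℕ → ℝ := fun m => (s + 1 + α 0) * ∏ i ∈ Finset.Ico 1 m, ((1 + α i) * φ i) with hB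
  have hBnn : ∀ m, 0 ≤ B m := fun m =>
    mul_nonneg (by linarith [ha 0])
      (Finset.prod_nonneg fun i _ => mul_nonneg (by linarith [ha i]) (hf0 i))
  have hB1 : B 1 = s + 1 + α 0 := by
    simp [hB]
  have key : ∀ m, 1 ≤ m → m ≤ n → S m ≤ B m := by
    intro m
    induction m with
    | zero => intro h; omega
    | succ k ih =>
      intro _ hk
      rcases Nat.eq_zero_or_pos k with rfl | hk1
      · -- m = 1
        rw [hrec 0, hS0, hB1]
        have h1 : (s + α 0) * φ 0 ≤ (s + α 0) * 1 :=
          mul_le_mul_of_nonneg_left (hf1 0) (by linarith [ha 0])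
        linarith
      · -- k ≥ 1
        have hSB : S k ≤ B k := ih hk1 (by omega)
        have hBk1 : 1 ≤ B k := by
          rcases Nat.lt_or_ge k 2 with hk2 | hk2
          · have : k = 1 := by omega
            rw [this, hB1]; linarith [ha 0]
          · exact le_trans (hA k hk2 (by omega)) hSB
        have hstep : S (k + 1) ≤ B k * ((1 + α k) * φ k) := by
          rw [hrec k]
          have h1 : S k + α k ≤ B k * (1 + α k) := by
            have h2 : α k ≤ B k * α k := le_mul_of_one_le_left (ha k) hBk1
            nlinarith
          calc (S k + α k) * φ k ≤ (B k * (1 + α k)) * φ k :=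
                mul_le_mul_of_nonneg_right h1 (hf0 k)
            _ = B k * ((1 + α k) * φ k) := by ring
        have hBsucc : B (k + 1) = B k * ((1 + α k) * φ k) := by
          simp only [hB]
          rw [Finset.prod_Ico_succ_top hk1]
          ring
        rw [hBsucc]; exact hstep
  have h1 : 1 ≤ B n := le_trans (hA n hn le_rfl) (key n (by omega) le_rfl)
  have hT : Real.sqrt (B n) = Real.sqrt (s + 1 + α 0) *
      ((∏ i ∈ Finset.Ico 1 n, Real.sqrt (1 + α i)) *
        ∏ i ∈ Finset.Ico 1 n, Real.sqrt (φ i)) := by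
    rw [hB, Real.sqrt_mul (by linarith [ha 0])]
    congr 1
    rw [← Finset.prod_mul_distrib,
      aux_sqrt_prod _ _ (fun i _ => mul_nonneg (by linarith [ha i]) (hf0 i))]
    exact Finset.prod_congr rfl fun i _ => Real.sqrt_mul (by linarith [ha i]) _
  calc (1:ℝ) = Real.sqrt 1 := Real.sqrt_one.symm
    _ ≤ Real.sqrt (B n) := Real.sqrt_le_sqrt h1
    _ = _ := hT

/-- for every starting point `s ≥ 1`, `x > 0`, the hitting time `M`
is almost surely finite, i.e. almost surely there is some `i > 1` with `s_i < 1`. -/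
theorem stmt11 {Ω : Type*} [MeasurableSpace Ω] (P : Measure Ω) [IsProbabilityMeasure P]
    (a f : ℕ → Ω → ℝ) (hsetup : IsChainSetup P a f)
    (s x : ℝ) (hs : 1 ≤ s) (hx : 0 < x) :
    ∀ᵐ ω ∂P, ∃ i : ℕ, 1 < i ∧ sChain a f s ω i < 1 := by
  classical
  obtain ⟨hindep, hmapa, hmapf⟩ := hsetup
  -- a.e.-measurability of the random variables
  have hPa : ∀ k, AEMeasurable (a k) P := by
    intro k
    by_contra h
    have h0 := hmapa k
    rw [Measure.map_of_not_aemeasurable h] at h0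
    have hprob : IsProbabilityMeasure (expMeasure 1) := isProbabilityMeasure_expMeasure one_pos
    have h1 : (0 : Measure ℝ) Set.univ = (expMeasure 1) Set.univ := by rw [h0]
    rw [hprob.measure_univ] at h1
    simp at h1
  have hPf : ∀ k, AEMeasurable (f k) P := by
    intro k
    by_contra h
    have h0 := hmapf k
    rw [Measure.map_of_not_aemeasurable h] at h0
    have h1 : (0 : Measure ℝ) Set.univ = (volume.restrict (Set.Icc (0:ℝ) 1)) Set.univ := by
      rw [h0]
    rw [Measure.restrict_apply_univ, Real.volume_Icc] at h1
    norm_num at h1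
  have horig : ∀ p : Bool × ℕ, AEMeasurable (cond p.1 (a p.2) (f p.2)) P := by
    rintro ⟨b, k⟩
    cases b
    · exact hPf k
    · exact hPa k
  -- measurable modifications
  set g' : Bool × ℕ → Ω → ℝ := fun p => (horig p).mk _ with hg'def
  have hg'meas : ∀ p, Measurable (g' p) := fun p => (horig p).measurable_mk
  have hg'ae : ∀ p : Bool × ℕ, (cond p.1 (a p.2) (f p.2)) =ᵐ[P] g' p :=
    fun p => (horig p).ae_eq_mk
  have hindep' : iIndepFun g' P := aux_iIndepFun_congr hindep hg'ae
  have hmapa' : ∀ k, Measure.map (g' (true, k)) P = expMeasure 1 := by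
    intro k
    rw [← Measure.map_congr (hg'ae (true, k))]
    exact hmapa k
  have hmapf' : ∀ k, Measure.map (g' (false, k)) P = volume.restrict (Set.Icc (0:ℝ) 1) := by
    intro k
    rw [← Measure.map_congr (hg'ae (false, k))]
    exact hmapf k
  -- the ENNReal-valued independent family
  set gr : Bool × ℕ → ℝ → ℝ := fun p x =>
    if p.1 then (if p.2 = 0 then Real.sqrt (s + 1 + x) else Real.sqrt (1 + x))
    else Real.sqrt x with hgrdef
  have hgrm : ∀ p, Measurable fun x : ℝ => ENNReal.ofReal (gr p x) := by
    rintro ⟨b, k⟩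
    apply ENNReal.measurable_ofReal.comp
    simp only [hgrdef]
    split_ifs <;> fun_prop
  set G : Bool × ℕ → Ω → ENNReal := fun p ω => ENNReal.ofReal (gr p (g' p ω)) with hGdef
  have hGmeas : ∀ p, Measurable (G p) := fun p => (hgrm p).comp (hg'meas p)
  have hGindep : iIndepFun G P :=
    hindep'.comp (fun p x => ENNReal.ofReal (gr p x)) hgrm
  -- values of the integrals
  have hmapint : ∀ p : Bool × ℕ,
      ∫⁻ ω, G p ω ∂P = ∫⁻ y, ENNReal.ofReal (gr p y) ∂(Measure.map (g' p) P) := by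
    intro p
    rw [lintegral_map (hgrm p) (hg'meas p)]
  have hval0 : ∫⁻ ω, G (true, 0) ω ∂P ≤ ENNReal.ofReal ((s + 3) / 2) := by
    rw [hmapint (true, 0), hmapa' 0]
    have h1 : ∫⁻ y, ENNReal.ofReal (gr (true, 0) y) ∂(expMeasure 1)
        ≤ ∫⁻ y, ENNReal.ofReal ((s + 2) / 2 + (1/2) * y) ∂(expMeasure 1) := by
      refine lintegral_mono_ae ?_
      filter_upwards [aux_ae_exp_nonneg] with y hy
      refine ENNReal.ofReal_le_ofReal ?_
      simp only [hgrdef, if_pos, if_true]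
      have := aux_sqrt_le_am (s + 1 + y) (by linarith)
      norm_num at this ⊢
      linarith
    refine le_trans h1 ?_
    rw [aux_exp_moment _ _ (by linarith) (by norm_num)]
    refine ENNReal.ofReal_le_ofReal (by linarith)
  have hvalT : ∀ k : ℕ, k ≠ 0 →
      ∫⁻ ω, G (true, k) ω ∂P ≤ ENNReal.ofReal (Real.sqrt 2) := by
    intro k hk
    rw [hmapint (true, k), hmapa' k]
    have h2p : 0 < Real.sqrt 2 := Real.sqrt_pos.2 (by norm_num)
    have h1 : ∫⁻ y, ENNReal.ofReal (gr (true, k) y) ∂(expMeasure 1)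
        ≤ ∫⁻ y, ENNReal.ofReal (3 / (2 * Real.sqrt 2) + (1 / (2 * Real.sqrt 2)) * y)
            ∂(expMeasure 1) := by
      refine lintegral_mono_ae ?_
      filter_upwards [aux_ae_exp_nonneg] with y hy
      refine ENNReal.ofReal_le_ofReal ?_
      simp only [hgrdef, if_pos, if_neg hk, if_true]
      exact aux_sqrt_one_add y hy
    refine le_trans h1 ?_
    rw [aux_exp_moment _ _ (by positivity) (by positivity), aux_coef_eq]
  have hvalF : ∀ k : ℕ, ∫⁻ ω, G (false, k) ω ∂P = ENNReal.ofReal (2/3) := by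
    intro k
    rw [hmapint (false, k), hmapf' k]
    have : (fun y => ENNReal.ofReal (gr (false, k) y))
        = fun y => ENNReal.ofReal (Real.sqrt y) := by
      funext y; simp [hgrdef]
    rw [this, aux_unif]
  -- constants
  set C : ENNReal := ENNReal.ofReal ((s + 3) / 2) with hCdef
  set ρ : ENNReal := ENNReal.ofReal (Real.sqrt 2) * ENNReal.ofReal (2/3) with hρdef
  have hρ : ρ < 1 := by
    rw [hρdef, ← ENNReal.ofReal_mul (Real.sqrt_nonneg 2)]
    refine ENNReal.ofReal_lt_one.2 ?_
    nlinarith [Real.sq_sqrt (show (0:ℝ) ≤ 2 by norm_num), Real.sqrt_nonneg 2]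
  -- good a.e. events
  have hgood_a : ∀ᵐ ω ∂P, ∀ k, 0 ≤ a k ω := by
    rw [ae_all_iff]
    intro k
    rw [ae_iff]
    have hset : {ω | ¬ 0 ≤ a k ω} = a k ⁻¹' (Set.Iio 0) := by ext; simp
    rw [hset, ← Measure.map_apply_of_aemeasurable (hPa k) measurableSet_Iio, hmapa k]
    rw [show expMeasure 1 = volume.withDensity (exponentialPDF 1) from rfl,
      withDensity_apply _ measurableSet_Iio]
    exact lintegral_exponentialPDF_of_nonpos le_rfl
  have hgood_f : ∀ᵐ ω ∂P, ∀ k, f k ω ∈ Set.Icc (0:ℝ) 1 := by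
    rw [ae_all_iff]
    intro k
    rw [ae_iff]
    have hset : {ω | ¬ f k ω ∈ Set.Icc (0:ℝ) 1} = f k ⁻¹' (Set.Icc (0:ℝ) 1)ᶜ := by ext; simp
    rw [hset, ← Measure.map_apply_of_aemeasurable (hPf k) measurableSet_Icc.compl, hmapf k,
      Measure.restrict_apply measurableSet_Icc.compl]
    simp
  have hgood_g : ∀ᵐ ω ∂P, ∀ p : Bool × ℕ, cond p.1 (a p.2) (f p.2) ω = g' p ω := by
    rw [ae_all_iff]
    exact fun p => hg'ae p
  -- key estimate
  have key : ∀ n : ℕ, P {ω | ¬ ∃ i : ℕ, 1 < i ∧ sChain a f s ω i < 1} ≤ C * ρ ^ (n + 1) := by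
    intro n
    set m : ℕ := n + 2 with hmdef
    set SF : Finset (Bool × ℕ) := insert ((true : Bool), (0:ℕ))
      ((Finset.Ico 1 m).image (fun i => ((true:Bool), i)) ∪
        (Finset.Ico 1 m).image (fun i => ((false:Bool), i))) with hSFdef
    have hsub : {ω | ¬ ∃ i : ℕ, 1 < i ∧ sChain a f s ω i < 1}
        ≤ᵐ[P] {ω | (1:ENNReal) ≤ ∏ p ∈ SF, G p ω} := by
      filter_upwards [hgood_a, hgood_f, hgood_g] with ω hga hgf hgg hbad
      push_neg at hbad
      -- real inequality from the deterministic lemma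
      have hreal : 1 ≤ Real.sqrt (s + 1 + a 0 ω) *
          ((∏ i ∈ Finset.Ico 1 m, Real.sqrt (1 + a i ω)) *
            ∏ i ∈ Finset.Ico 1 m, Real.sqrt (f i ω)) := by
        refine aux_det (fun k => a k ω) (fun k => f k ω) s hs (fun k => hga k)
          (fun k => (hgf k).1) (fun k => (hgf k).2) (fun k => sChain a f s ω k) rfl
          (fun k => rfl) m (by omega) ?_
        intro i h2i _
        exact hbad i (by omega)
      show (1:ENNReal) ≤ ∏ p ∈ SF, G p ω
      rw [hSFdef, aux_prod_SF (fun p => G p ω) m]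
      have hGt0 : G (true, 0) ω = ENNReal.ofReal (Real.sqrt (s + 1 + a 0 ω)) := by
        simp only [hGdef, hgrdef]
        rw [← hgg (true, 0)]
        simp
      have hGti : ∀ i ∈ Finset.Ico 1 m, G (true, i) ω
          = ENNReal.ofReal (Real.sqrt (1 + a i ω)) := by
        intro i hi
        rw [Finset.mem_Ico] at hi
        simp only [hGdef, hgrdef]
        rw [← hgg (true, i)]
        simp only [Bool.cond_true, if_pos, if_true]
        rw [if_neg (by omega)]
      have hGfi : ∀ i ∈ Finset.Ico 1 m, G (false, i) ω
          = ENNReal.ofReal (Real.sqrt (f i ω)) := by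
        intro i _
        simp only [hGdef, hgrdef]
        rw [← hgg (false, i)]
        simp
      rw [hGt0, Finset.prod_congr rfl hGti, Finset.prod_congr rfl hGfi]
      rw [← ENNReal.ofReal_prod_of_nonneg (fun i _ => Real.sqrt_nonneg _),
        ← ENNReal.ofReal_prod_of_nonneg (fun i _ => Real.sqrt_nonneg _),
        ← ENNReal.ofReal_mul (Finset.prod_nonneg fun i _ => Real.sqrt_nonneg _),
        ← ENNReal.ofReal_mul (Real.sqrt_nonneg _)]
      calc (1:ENNReal) = ENNReal.ofReal 1 := by simp
        _ ≤ _ := ENNReal.ofReal_le_ofReal hreal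
    have hprodmeas : Measurable fun ω => ∏ p ∈ SF, G p ω :=
      Finset.measurable_prod SF (fun p _ => hGmeas p)
    calc P {ω | ¬ ∃ i : ℕ, 1 < i ∧ sChain a f s ω i < 1}
        ≤ P {ω | (1:ENNReal) ≤ ∏ p ∈ SF, G p ω} := measure_mono_ae hsub
      _ ≤ ∫⁻ ω, ∏ p ∈ SF, G p ω ∂P := by
          have h := mul_meas_ge_le_lintegral₀ (μ := P) hprodmeas.aemeasurable (1 : ENNReal)
          rw [one_mul] at h
          exact h
      _ = ∏ p ∈ SF, ∫⁻ ω, G p ω ∂P := aux_lintegral_prod hGindep hGmeas SF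
      _ ≤ C * ρ ^ (n + 1) := by
          rw [hSFdef, aux_prod_SF (fun p => ∫⁻ ω, G p ω ∂P) m]
          have h1 : (∏ i ∈ Finset.Ico 1 m, ∫⁻ ω, G (true, i) ω ∂P)
              ≤ (ENNReal.ofReal (Real.sqrt 2)) ^ (n + 1) := by
            calc (∏ i ∈ Finset.Ico 1 m, ∫⁻ ω, G (true, i) ω ∂P)
                ≤ ∏ _i ∈ Finset.Ico 1 m, ENNReal.ofReal (Real.sqrt 2) := by
                  refine Finset.prod_le_prod' fun i hi => ?_
                  rw [Finset.mem_Ico] at hi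
                  exact hvalT i (by omega)
              _ = (ENNReal.ofReal (Real.sqrt 2)) ^ (n + 1) := by
                  rw [Finset.prod_const, Nat.card_Ico]
                  congr 1
          have h2 : (∏ i ∈ Finset.Ico 1 m, ∫⁻ ω, G (false, i) ω ∂P)
              = (ENNReal.ofReal (2/3)) ^ (n + 1) := by
            rw [Finset.prod_congr rfl (fun i _ => hvalF i), Finset.prod_const, Nat.card_Ico]
            congr 1
          calc (∫⁻ ω, G (true, 0) ω ∂P) *
                ((∏ i ∈ Finset.Ico 1 m, ∫⁻ ω, G (true, i) ω ∂P) *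
                  ∏ i ∈ Finset.Ico 1 m, ∫⁻ ω, G (false, i) ω ∂P)
              ≤ C * ((ENNReal.ofReal (Real.sqrt 2)) ^ (n + 1) *
                  (ENNReal.ofReal (2/3)) ^ (n + 1)) := by
                refine mul_le_mul' hval0 (mul_le_mul' h1 (le_of_eq h2))
            _ = C * ρ ^ (n + 1) := by rw [hρdef, mul_pow]
  -- conclude
  have hC : C ≠ ⊤ := ENNReal.ofReal_ne_top
  have htend : Tendsto (fun n : ℕ => C * ρ ^ (n + 1)) atTop (𝓝 0) := by
    have h1 : Tendsto (fun n : ℕ => ρ ^ n) atTop (𝓝 0) :=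
      ENNReal.tendsto_pow_atTop_nhds_zero_of_lt_one hρ
    have h2 : Tendsto (fun n : ℕ => ρ ^ (n + 1)) atTop (𝓝 0) :=
      h1.comp (tendsto_add_atTop_nat 1)
    have h3 := ENNReal.Tendsto.const_mul h2 (Or.inr hC)
    simpa using h3
  have hzero : P {ω | ¬ ∃ i : ℕ, 1 < i ∧ sChain a f s ω i < 1} ≤ 0 :=
    ge_of_tendsto' htend key
  rw [ae_iff]
  exact le_antisymm hzero (zero_le)
end

section
/- lim_{x→0⁺} (1/x)·(Ψ(x, 1; 1) − 1) = 0; explicitly, lim_{x→0⁺} (1/x)·(Γ(x)^{-1} ∫_0^∞ e^{-t} t^{x-1} (1+t)^{-x} dt − 1) = 0. (This is the statement ∂_a Ψ(a, 1; 1)|_{a=0} = 0.) -/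
open MeasureTheory Real Filter Topology

lemma psiAux_contOn (x c : ℝ) :
    ContinuousOn (fun t : ℝ => Real.exp (-t) * t ^ (x-1) * ((1+t) ^ c - 1)) (Set.Ioi 0) := by
  intro t ht
  have ht' : (0:ℝ) < t := ht
  apply ContinuousAt.continuousWithinAt
  exact ((Real.continuous_exp.comp continuous_neg).continuousAt.mul
      (Real.continuousAt_rpow_const t _ (Or.inl ht'.ne'))).mul
    ((((continuous_const.add continuous_id).continuousAt).rpow_const
      (Or.inl (ne_of_gt (by show (0:ℝ) < 1 + t; linarith)))).sub continuousAt_const)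

lemma psiAux_bound {x t : ℝ} (hx : x ∈ Set.Ioo (0:ℝ) (1/2)) (ht : t ∈ Set.Ioi (0:ℝ)) :
    ‖Real.exp (-t) * t ^ (x-1) * ((1+t) ^ (-x) - 1)‖
      ≤ Real.exp (-t) * (1 + t ^ (-(1:ℝ)/2)) := by
  have ht' : (0:ℝ) < t := ht
  obtain ⟨hx0, hx2⟩ := hx
  have h1t : (1:ℝ) ≤ 1 + t := by linarith
  have hpow_le_one : (1+t) ^ (-x) ≤ 1 :=
    Real.rpow_le_one_of_one_le_of_nonpos h1t (by linarith)
  have hpow_pos : 0 < (1+t) ^ (-x) := Real.rpow_pos_of_pos (by linarith) _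
  have habs : |(1+t) ^ (-x) - 1| = 1 - (1+t) ^ (-x) := by
    rw [abs_sub_comm, abs_of_nonneg (by linarith)]
  rw [norm_eq_abs, abs_mul, abs_mul, abs_of_nonneg (Real.exp_pos _).le,
    abs_of_nonneg (Real.rpow_nonneg ht'.le _), habs]
  rcases le_or_gt t 1 with h | h
  · -- small t : 1 - (1+t)^{-x} ≤ x * t
    have hlog : Real.log (1+t) ≤ t := by
      have := Real.log_le_sub_one_of_pos (by linarith : (0:ℝ) < 1+t)
      linarith
    have hkey : 1 - (1+t) ^ (-x) ≤ x * t := by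
      have hrw : (1+t) ^ (-x) = Real.exp (-(x * Real.log (1+t))) := by
        rw [Real.rpow_def_of_pos (by linarith)]; ring_nf
      have := Real.add_one_le_exp (-(x * Real.log (1+t)))
      have hxl : x * Real.log (1+t) ≤ x * t :=
        mul_le_mul_of_nonneg_left hlog hx0.le
      rw [hrw]; linarith
    have htx : t ^ (x - 1) * (x * t) = x * t ^ x := by
      have : t ^ (x - 1) * t = t ^ x := by
        nth_rewrite 2 [← Real.rpow_one t]
        rw [← Real.rpow_add ht']; ring_nf
      calc t ^ (x - 1) * (x * t) = x * (t ^ (x-1) * t) := by ring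
        _ = x * t ^ x := by rw [this]
    calc Real.exp (-t) * t ^ (x-1) * (1 - (1+t) ^ (-x))
        ≤ Real.exp (-t) * t ^ (x-1) * (x * t) := by
          apply mul_le_mul_of_nonneg_left hkey (by positivity)
      _ = Real.exp (-t) * (x * t ^ x) := by
          rw [mul_assoc, htx]
      _ ≤ Real.exp (-t) * 1 := by
          apply mul_le_mul_of_nonneg_left _ (Real.exp_pos _).le
          have : t ^ x ≤ 1 := Real.rpow_le_one ht'.le h hx0.le
          nlinarith
      _ ≤ Real.exp (-t) * (1 + t ^ (-(1:ℝ)/2)) := by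
          have : (0:ℝ) ≤ t ^ (-(1:ℝ)/2) := Real.rpow_nonneg ht'.le _
          nlinarith [Real.exp_pos (-t)]
  · -- large t : t^{x-1} ≤ t^{-1/2}
    have hkey : t ^ (x-1) ≤ t ^ (-(1:ℝ)/2) :=
      Real.rpow_le_rpow_of_exponent_le h.le (by linarith)
    calc Real.exp (-t) * t ^ (x-1) * (1 - (1+t) ^ (-x))
        ≤ Real.exp (-t) * t ^ (x-1) * 1 := by
          apply mul_le_mul_of_nonneg_left (by linarith) (by positivity)
      _ = Real.exp (-t) * t ^ (x-1) := by ring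
      _ ≤ Real.exp (-t) * (1 + t ^ (-(1:ℝ)/2)) := by
          have := (Real.exp_pos (-t)).le
          nlinarith

lemma psiBound_integrable :
    IntegrableOn (fun t : ℝ => Real.exp (-t) * (1 + t ^ (-(1:ℝ)/2))) (Set.Ioi 0) := by
  have h1 : IntegrableOn (fun t : ℝ => Real.exp (-t) * t ^ ((1:ℝ) - 1)) (Set.Ioi 0) :=
    Real.GammaIntegral_convergent one_pos
  have h2 : IntegrableOn (fun t : ℝ => Real.exp (-t) * t ^ ((1:ℝ)/2 - 1)) (Set.Ioi 0) :=
    Real.GammaIntegral_convergent (by norm_num)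
  apply (h1.add h2).congr
  refine (ae_restrict_iff' measurableSet_Ioi).2 (ae_of_all _ fun t ht => ?_)
  have ht' : (0:ℝ) < t := ht
  have e1 : t ^ ((1:ℝ) - 1) = 1 := by norm_num
  have e2 : (1:ℝ)/2 - 1 = -(1:ℝ)/2 := by norm_num
  rw [Pi.add_apply, e1, e2]; ring

lemma psiDiff_tendsto :
    Tendsto (fun x : ℝ => ∫ t in Set.Ioi (0:ℝ),
      Real.exp (-t) * t ^ (x-1) * ((1+t) ^ (-x) - 1)) (𝓝[>] 0) (𝓝 0) := by
  suffices h : Tendsto (fun x : ℝ => ∫ t in Set.Ioi (0:ℝ),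
      Real.exp (-t) * t ^ (x-1) * ((1+t) ^ (-x) - 1)) (𝓝[>] 0)
      (𝓝 (∫ _t in Set.Ioi (0:ℝ), (0:ℝ))) by simpa using h
  apply MeasureTheory.tendsto_integral_filter_of_dominated_convergence
    (fun t => Real.exp (-t) * (1 + t ^ (-(1:ℝ)/2)))
  · filter_upwards [self_mem_nhdsWithin] with x _
    exact ((psiAux_contOn x (-x)).aestronglyMeasurable measurableSet_Ioi)
  · filter_upwards [Ioo_mem_nhdsGT_of_mem (by norm_num : (0:ℝ) ∈ Set.Ico 0 (1/2))] with x hx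
    refine (ae_restrict_iff' measurableSet_Ioi).2 (ae_of_all _ fun t ht => ?_)
    exact psiAux_bound hx ht
  · exact psiBound_integrable
  · refine (ae_restrict_iff' measurableSet_Ioi).2 (ae_of_all _ fun t ht => ?_)
    have ht' : (0:ℝ) < t := ht
    have ha : ContinuousAt (fun x : ℝ => t ^ (x-1)) 0 :=
      (Real.continuousAt_const_rpow ht'.ne').comp (continuousAt_id.sub continuousAt_const)
    have hb : ContinuousAt (fun x : ℝ => (1+t) ^ (-x)) 0 :=
      (Real.continuousAt_const_rpow (by linarith : (1+t) ≠ 0)).comp continuousAt_id.neg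
    have h1 : ContinuousAt (fun x : ℝ => Real.exp (-t) * t ^ (x-1) * ((1+t) ^ (-x) - 1)) 0 :=
      ((continuousAt_const.mul ha).mul (hb.sub continuousAt_const))
    have := h1.tendsto.mono_left (nhdsWithin_le_nhds (s := Set.Ioi (0:ℝ)))
    simpa [Real.rpow_zero] using this

lemma integrableOn_psi_integrand {x : ℝ} (hx : 0 < x) :
    IntegrableOn (fun t : ℝ => Real.exp (-t) * t ^ (x - 1) * (1 + t) ^ (-x)) (Set.Ioi 0) := by
  refine MeasureTheory.Integrable.mono (Real.GammaIntegral_convergent hx) ?_ ?_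
  · apply ContinuousOn.aestronglyMeasurable _ measurableSet_Ioi
    intro t ht
    have ht' : (0:ℝ) < t := ht
    apply ContinuousAt.continuousWithinAt
    exact ((Real.continuous_exp.comp continuous_neg).continuousAt.mul
        (Real.continuousAt_rpow_const t _ (Or.inl ht'.ne'))).mul
      (((continuous_const.add continuous_id).continuousAt).rpow_const (Or.inl (ne_of_gt (by show (0:ℝ) < 1 + t; linarith))))
  · refine (ae_restrict_iff' measurableSet_Ioi).2 (ae_of_all _ fun t ht => ?_)
    have ht' : (0:ℝ) < t := ht
    have h1 : 0 < (1+t) ^ (-x) := Real.rpow_pos_of_pos (by linarith) _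
    have h2 : (1+t) ^ (-x) ≤ 1 :=
      Real.rpow_le_one_of_one_le_of_nonpos (by linarith) (by linarith)
    rw [norm_eq_abs, norm_eq_abs, abs_mul, abs_mul]
    have hnn : 0 ≤ |Real.exp (-t)| * |t ^ (x-1)| := by positivity
    calc |Real.exp (-t)| * |t ^ (x-1)| * |(1+t) ^ (-x)|
        ≤ |Real.exp (-t)| * |t ^ (x-1)| * 1 := by
          apply mul_le_mul_of_nonneg_left _ hnn
          rw [abs_of_pos h1]; exact h2
      _ = |Real.exp (-t)| * |t ^ (x-1)| := by ring

lemma uFun_sub_Gamma {x : ℝ} (hx : 0 < x) :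
    uFun x 1 1 - Real.Gamma x
      = ∫ t in Set.Ioi (0:ℝ), Real.exp (-t) * t ^ (x-1) * ((1+t) ^ (-x) - 1) := by
  have h1 : uFun x 1 1 = ∫ t in Set.Ioi (0:ℝ),
      Real.exp (-t) * t ^ (x - 1) * (1 + t) ^ (-x) := by
    unfold uFun
    congr 1
    funext t
    norm_num
  rw [h1, Real.Gamma_eq_integral hx,
    ← MeasureTheory.integral_sub (integrableOn_psi_integrand hx)
      (Real.GammaIntegral_convergent hx)]
  congr 1
  funext t
  ring

lemma xGamma_tendsto : Tendsto (fun x : ℝ => x * Real.Gamma x) (𝓝[>] 0) (𝓝 1) := by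
  have h1 : ContinuousAt Real.Gamma 1 := by
    refine (Real.differentiableAt_Gamma fun m => ?_).continuousAt
    intro h
    have h0 : (0:ℝ) ≤ m := Nat.cast_nonneg m
    linarith
  have h2 : Tendsto (fun x : ℝ => Real.Gamma (x + 1)) (𝓝 0) (𝓝 1) := by
    have hadd : Tendsto (fun x : ℝ => x + 1) (𝓝 (0:ℝ)) (𝓝 1) := by
      simpa using (continuous_add_right (1:ℝ)).tendsto 0
    simpa [Real.Gamma_one, Function.comp_def] using h1.tendsto.comp hadd
  have h3 : Tendsto (fun x : ℝ => Real.Gamma (x + 1)) (𝓝[>] 0) (𝓝 1) :=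
    h2.mono_left nhdsWithin_le_nhds
  refine h3.congr' ?_
  filter_upwards [self_mem_nhdsWithin] with x hx
  rw [Real.Gamma_add_one (ne_of_gt hx)]

/-- `lim_{x → 0⁺} (1/x)(Ψ(x, 1; 1) - 1) = 0`,
i.e. `∂ₐΨ(a, 1; 1)|_{a=0} = 0`. -/
theorem stmt16 :
    Tendsto (fun x : ℝ => (1/x) * (Psi x 1 1 - 1)) (nhdsWithin 0 (Set.Ioi 0)) (nhds 0) := by
  have hdiff : Tendsto (fun x : ℝ => uFun x 1 1 - Real.Gamma x) (𝓝[>] 0) (𝓝 0) := by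
    refine psiDiff_tendsto.congr' ?_
    filter_upwards [self_mem_nhdsWithin] with x hx
    exact (uFun_sub_Gamma hx).symm
  have hmain : Tendsto (fun x : ℝ => (x * Real.Gamma x)⁻¹ * (uFun x 1 1 - Real.Gamma x))
      (𝓝[>] 0) (𝓝 0) := by
    have := (xGamma_tendsto.inv₀ one_ne_zero).mul hdiff
    simpa using this
  refine hmain.congr' ?_
  filter_upwards [self_mem_nhdsWithin] with x hx
  have hx' : (0:ℝ) < x := hx
  have hΓ : 0 < Real.Gamma x := Real.Gamma_pos_of_pos hx'
  unfold Psi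
  field_simp
end

section
/- lim_{x→0⁺} (1/x)·(Ψ(x, 0; 1) − 1) = −∫_0^∞ e^{-t} (1+t)^{-1} dt; explicitly, lim_{x→0⁺} (1/x)·(Γ(x)^{-1} ∫_0^∞ e^{-t} t^{x-1} (1+t)^{-x-1} dt − 1) = −∫_0^∞ e^{-t} (1+t)^{-1} dt. (This is the statement ∂_a Ψ(a, 0; 1)|_{a=0} = −∫_0^∞ e^{-t}(1+t)^{-1} dt.) -/
open MeasureTheory Real Filter Topology

private lemma measAux (x : ℝ) :
    Measurable (fun t : ℝ => Real.exp (-t) * t ^ (x - 1) * ((1 + t) ^ (-x - 1) - 1)) := by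
  fun_prop

private lemma int1 {x : ℝ} (hx : 0 < x) :
    IntegrableOn (fun t : ℝ => Real.exp (-t) * t ^ (x - 1) * (1 + t) ^ (-x - 1))
      (Set.Ioi 0) := by
  refine (Real.GammaIntegral_convergent hx).mono' (Measurable.aestronglyMeasurable (by fun_prop)) ?_
  filter_upwards [ae_restrict_mem measurableSet_Ioi] with t ht
  have ht0 : (0:ℝ) < t := ht
  have h1 : (1 + t) ^ (-x - 1) ≤ 1 :=
    Real.rpow_le_one_of_one_le_of_nonpos (by linarith) (by linarith)
  have h2 : (0:ℝ) ≤ (1 + t) ^ (-x - 1) := Real.rpow_nonneg (by linarith) _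
  have h3 : (0:ℝ) ≤ t ^ (x - 1) := Real.rpow_nonneg ht0.le _
  rw [Real.norm_eq_abs, abs_of_nonneg (by positivity)]
  calc Real.exp (-t) * t ^ (x - 1) * (1 + t) ^ (-x - 1)
      ≤ Real.exp (-t) * t ^ (x - 1) * 1 := by
        apply mul_le_mul_of_nonneg_left h1 (by positivity)
    _ = Real.exp (-t) * t ^ (x - 1) := by ring

private lemma uFun_sub {x : ℝ} (hx : 0 < x) :
    uFun x 0 1 - Real.Gamma x
      = ∫ t in Set.Ioi (0:ℝ), Real.exp (-t) * t ^ (x - 1) * ((1 + t) ^ (-x - 1) - 1) := by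
  have hu : uFun x 0 1
      = ∫ t in Set.Ioi (0:ℝ), Real.exp (-t) * t ^ (x - 1) * (1 + t) ^ (-x - 1) := by
    unfold uFun
    simp only [show (0:ℝ) - x - 1 = -x - 1 from by ring, neg_one_mul]
  rw [hu, Real.Gamma_eq_integral hx,
    ← integral_sub (int1 hx) (Real.GammaIntegral_convergent hx)]
  apply setIntegral_congr_fun measurableSet_Ioi
  intro t _
  ring

/-- `lim_{x → 0⁺} (1/x)(Ψ(x, 0; 1) - 1) = -∫_0^∞ e^{-t}(1+t)^{-1} dt`,
i.e. `∂ₐΨ(a, 0; 1)|_{a=0} = -∫_0^∞ e^{-t}(1+t)^{-1} dt`. -/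
theorem stmt17 :
    Tendsto (fun x : ℝ => (1/x) * (Psi x 0 1 - 1)) (nhdsWithin 0 (Set.Ioi 0))
      (nhds (-∫ t in Set.Ioi (0:ℝ), Real.exp (-t) * (1 + t)⁻¹)) := by
  set J : ℝ → ℝ := fun x =>
    ∫ t in Set.Ioi (0:ℝ), Real.exp (-t) * t ^ (x - 1) * ((1 + t) ^ (-x - 1) - 1) with hJdef
  -- Step 1: eventual equality
  have key : ∀ᶠ x in nhdsWithin (0:ℝ) (Set.Ioi 0),
      (1/x) * (Psi x 0 1 - 1) = (Real.Gamma (x + 1))⁻¹ * J x := by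
    filter_upwards [self_mem_nhdsWithin] with x hx
    have hx0 : (0:ℝ) < x := hx
    have hG : (0:ℝ) < Real.Gamma x := Real.Gamma_pos_of_pos hx0
    rw [hJdef]
    simp only
    rw [← uFun_sub hx0, Real.Gamma_add_one hx0.ne', Psi]
    field_simp
  rw [tendsto_congr' key]
  -- Step 2: Gamma part
  have hG : Tendsto (fun x : ℝ => (Real.Gamma (x + 1))⁻¹)
      (nhdsWithin 0 (Set.Ioi 0)) (nhds 1) := by
    have hc : ContinuousAt Real.Gamma 1 := by
      refine (Real.differentiableAt_Gamma (fun m => ?_)).continuousAt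
      intro h
      have h0 : (0:ℝ) ≤ (m:ℝ) := Nat.cast_nonneg m
      linarith
    have h1 : Tendsto (fun x : ℝ => x + 1) (nhdsWithin 0 (Set.Ioi 0)) (nhds 1) := by
      have h := ((continuous_id.add continuous_const).tendsto (0:ℝ) :
        Tendsto (fun x : ℝ => x + 1) (nhds 0) (nhds (0 + 1)))
      exact ((continuous_add_right (1:ℝ)).tendsto' 0 1 (by norm_num)).mono_left nhdsWithin_le_nhds
    have h2 : Tendsto (fun x : ℝ => Real.Gamma (x + 1))
        (nhdsWithin 0 (Set.Ioi 0)) (nhds 1) := by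
      simpa [Real.Gamma_one, Function.comp_def] using hc.tendsto.comp h1
    simpa using h2.inv₀ one_ne_zero
  -- Step 3: DCT
  have hJ : Tendsto J (nhdsWithin 0 (Set.Ioi 0))
      (nhds (∫ t in Set.Ioi (0:ℝ),
        Real.exp (-t) * t ^ (-1:ℝ) * ((1 + t) ^ (-1:ℝ) - 1))) := by
    rw [hJdef]
    have h0 : ((0:ℝ) - 1) = (-1:ℝ) := by ring
    refine tendsto_integral_filter_of_dominated_convergence
      (fun t => 3 * Real.exp (-t)) ?_ ?_ ?_ ?_
    · filter_upwards with x
      exact (measAux x).aestronglyMeasurable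
    · filter_upwards [Ioc_mem_nhdsGT_of_mem
        (by norm_num : (0:ℝ) ∈ Set.Ico (0:ℝ) (1/2))] with x hx
      filter_upwards [ae_restrict_mem measurableSet_Ioi] with t ht
      have ht0 : (0:ℝ) < t := ht
      have hx0 : 0 < x := hx.1
      have hx2 : x ≤ 1/2 := hx.2
      have h1t : (1:ℝ) ≤ 1 + t := by linarith
      have hpow1 : (1 + t) ^ (-x - 1) ≤ 1 :=
        Real.rpow_le_one_of_one_le_of_nonpos h1t (by linarith)
      have hpow0 : (0:ℝ) ≤ (1 + t) ^ (-x - 1) := Real.rpow_nonneg (by linarith) _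
      have ht1 : (0:ℝ) ≤ t ^ (x - 1) := Real.rpow_nonneg ht0.le _
      rw [Real.norm_eq_abs, abs_mul, abs_mul, abs_of_nonneg (Real.exp_pos _).le,
        abs_of_nonneg ht1, abs_of_nonpos (by linarith), neg_sub]
      have hmain : t ^ (x - 1) * (1 - (1 + t) ^ (-x - 1)) ≤ 3 := by
        rcases le_or_gt 1 t with h | h
        · have hA : t ^ (x - 1) ≤ 1 :=
            Real.rpow_le_one_of_one_le_of_nonpos h (by linarith)
          nlinarith
        · -- t < 1
          set u := (1 + t) ^ (x + 1) with hu
          have hu1 : (1:ℝ) ≤ u := by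
            have := Real.rpow_le_rpow_of_exponent_le h1t
              (show (0:ℝ) ≤ x + 1 by linarith)
            simpa [hu, Real.rpow_zero] using this
          have hinv : (1 + t) ^ (-x - 1) = u⁻¹ := by
            rw [hu, show -x - 1 = -(x + 1) by ring, Real.rpow_neg (by linarith)]
          have hu2 : u ≤ (1 + t) ^ (2:ℕ) := by
            have := Real.rpow_le_rpow_of_exponent_le h1t
              (show x + 1 ≤ (2:ℝ) by linarith)
            rw [hu]
            calc (1 + t) ^ (x + 1) ≤ (1 + t) ^ (2:ℝ) := this
              _ = (1 + t) ^ (2:ℕ) := by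
                  rw [← Real.rpow_natCast (1 + t) 2]; norm_num
          have hub : u - 1 ≤ 3 * t := by
            have : (1 + t) ^ (2:ℕ) = 1 + 2*t + t^2 := by ring
            nlinarith
          have hkey : 1 - u⁻¹ ≤ u - 1 := by
            have hu0 : (0:ℝ) < u := by linarith
            have : u * u⁻¹ = 1 := mul_inv_cancel₀ hu0.ne'
            nlinarith [sq_nonneg (u - 1)]
          have hbound : 1 - (1 + t) ^ (-x - 1) ≤ 3 * t := by
            rw [hinv]; linarith
          have htx : t ^ (x - 1) * (3 * t) = 3 * t ^ x := by
            rw [show t ^ x = t ^ (x - 1 + 1) by norm_num,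
              Real.rpow_add_one ht0.ne']
            ring
          have htx1 : t ^ x ≤ 1 := Real.rpow_le_one ht0.le h.le (by linarith)
          calc t ^ (x - 1) * (1 - (1 + t) ^ (-x - 1))
              ≤ t ^ (x - 1) * (3 * t) :=
                mul_le_mul_of_nonneg_left hbound ht1
            _ = 3 * t ^ x := htx
            _ ≤ 3 := by linarith
      rw [mul_assoc]
      calc Real.exp (-t) * (t ^ (x - 1) * (1 - (1 + t) ^ (-x - 1)))
          ≤ Real.exp (-t) * 3 := by
            apply mul_le_mul_of_nonneg_left hmain (Real.exp_pos _).le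
        _ = 3 * Real.exp (-t) := by ring
    · have := (Real.GammaIntegral_convergent one_pos).const_mul 3
      simpa [Real.rpow_zero] using this
    · filter_upwards [ae_restrict_mem measurableSet_Ioi] with t ht
      have ht0 : (0:ℝ) < t := ht
      have hc : ContinuousAt
          (fun x : ℝ => Real.exp (-t) * t ^ (x - 1) * ((1 + t) ^ (-x - 1) - 1)) 0 := by
        have h1 : ContinuousAt (fun x : ℝ => t ^ (x - 1)) 0 :=
          (Real.continuousAt_const_rpow ht0.ne').comp
            ((continuous_id.sub continuous_const).continuousAt)
        have h2 : ContinuousAt (fun x : ℝ => (1 + t) ^ (-x - 1)) 0 :=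
          (Real.continuousAt_const_rpow (by linarith : (1:ℝ) + t ≠ 0)).comp
            ((continuous_neg.sub continuous_const).continuousAt)
        exact (continuousAt_const.mul h1).mul (h2.sub continuousAt_const)
      have h := hc.tendsto.mono_left (nhdsWithin_le_nhds (s := Set.Ioi (0:ℝ)))
      simpa [zero_sub, neg_zero] using h
  have hval : (∫ t in Set.Ioi (0:ℝ),
      Real.exp (-t) * t ^ (-1:ℝ) * ((1 + t) ^ (-1:ℝ) - 1))
      = -∫ t in Set.Ioi (0:ℝ), Real.exp (-t) * (1 + t)⁻¹ := by
    rw [← integral_neg]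
    apply setIntegral_congr_fun measurableSet_Ioi
    intro t ht
    have ht0 : (0:ℝ) < t := ht
    have h1t : (0:ℝ) < 1 + t := by linarith
    simp only [Real.rpow_neg_one]
    field_simp
    ring
  have hfinal := hG.mul hJ
  rw [hval] at hfinal
  simpa using hfinal
end

section
/- For every z > 0 and b ∈ ℝ, lim_{a→0⁺} Ψ(a, b; z) = 1; explicitly, lim_{a→0⁺} Γ(a)^{-1} ∫_0^∞ e^{-zt} t^{a-1} (1+t)^{b-a-1} dt = 1. (This justifies the special value Ψ(0, b; z) = 1.) -/
open MeasureTheory Real Filter Topology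

open Set Asymptotics in
lemma aux_exp_sub_one (u : ℝ) : |Real.exp u - 1| ≤ |u| * Real.exp |u| := by
  rcases le_or_gt 0 u with h | h
  · rw [abs_of_nonneg h, abs_of_nonneg (by linarith [Real.one_le_exp h] : (0:ℝ) ≤ Real.exp u - 1)]
    have h1 : -u + 1 ≤ Real.exp (-u) := Real.add_one_le_exp (-u)
    have h2 : Real.exp (-u) * Real.exp u = 1 := by
      rw [← Real.exp_add]; simp
    have h3 : 0 < Real.exp u := Real.exp_pos u
    nlinarith [mul_le_mul_of_nonneg_right h1 h3.le]
  · rw [abs_of_neg h, abs_of_nonpos (by linarith [Real.exp_lt_one_iff.mpr h] : Real.exp u - 1 ≤ 0)]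
    have h1 : u + 1 ≤ Real.exp u := Real.add_one_le_exp u
    have h2 : 1 ≤ Real.exp (-u) := Real.one_le_exp (by linarith)
    nlinarith

open Set Asymptotics in
lemma aux_int1 {z : ℝ} (hz : 0 < z) (c : ℝ) :
    IntegrableOn (fun t : ℝ => Real.exp (-z*t) * (1+t)^c) (Set.Ioi 1) := by
  apply integrable_of_isBigO_exp_neg (half_pos hz)
  · exact (Real.continuous_exp.comp (continuous_const.mul continuous_id)).continuousOn.mul
      ((continuous_const.add continuous_id).continuousOn.rpow_const
        (fun t ht => Or.inl (by have := mem_Ici.mp ht; show (1:ℝ) + t ≠ 0; exact ne_of_gt (by linarith))))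
  · have key : Tendsto (fun t : ℝ => (1+t)^c * Real.exp (-(z/2) * t)) atTop (nhds 0) := by
      have h1 := (isLittleO_rpow_exp_pos_mul_atTop c (half_pos hz)).tendsto_div_nhds_zero
      have h2 : Tendsto (fun t : ℝ => 1 + t) atTop atTop :=
        tendsto_atTop_add_const_left _ 1 tendsto_id
      have h3 := (h1.comp h2).mul_const (Real.exp (z/2))
      rw [zero_mul] at h3
      refine h3.congr fun t => ?_
      rw [Function.comp_apply, div_mul_eq_mul_div, div_eq_iff (Real.exp_pos _).ne',
        mul_assoc, ← Real.exp_add]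
      congr 2
      ring
    have hO : (fun t : ℝ => Real.exp (-z*t) * (1+t)^c) =O[atTop]
        fun t => Real.exp (-(z/2) * t) := by
      have := (key.isBigO_one ℝ).mul (isBigO_refl (fun t : ℝ => Real.exp (-(z/2)*t)) atTop)
      simp only [one_mul] at this
      refine this.congr' (Eventually.of_forall fun t => ?_) (Eventually.of_forall fun t => rfl)
      show (1+t)^c * Real.exp (-(z/2)*t) * Real.exp (-(z/2)*t) = _
      rw [mul_assoc, ← Real.exp_add, mul_comm]
      congr 2
      ring
    exact hO

open Set Asymptotics in
lemma aux_cont {z a b : ℝ} :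
    ContinuousOn (fun t : ℝ => Real.exp (-z*t) * t^(a-1) * (1+t)^(b-a-1)) (Set.Ioi 0) :=
  ((Real.continuous_exp.comp (continuous_const.mul continuous_id)).continuousOn.mul
    (continuousOn_id.rpow_const fun t ht => Or.inl (ne_of_gt ht))).mul
    ((continuous_const.add continuous_id).continuousOn.rpow_const
      fun t ht => Or.inl (by have := mem_Ioi.mp ht; show (1:ℝ) + t ≠ 0; exact ne_of_gt (by linarith)))

open Set Asymptotics in
lemma aux_int_h {z : ℝ} (hz : 0 < z) (b : ℝ) {a : ℝ} (ha : 0 < a) (ha2 : a ≤ 1) :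
    IntegrableOn (fun t : ℝ => Real.exp (-z*t) * t^(a-1) * (1+t)^(b-a-1)) (Set.Ioi 0) := by
  have habs : |b - a - 1| ≤ |b| + 2 := by
    have hb1 : -|b| ≤ b := neg_abs_le b
    have hb2 : b ≤ |b| := le_abs_self b
    rw [abs_le]; constructor <;> linarith
  rw [← Ioc_union_Ioi_eq_Ioi (zero_le_one : (0:ℝ) ≤ 1), integrableOn_union]
  constructor
  · refine Integrable.mono' (g := fun t => (2:ℝ)^(|b|+2) * t^(a-1))
      (((intervalIntegrable_iff_integrableOn_Ioc_of_le zero_le_one).mp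
        (intervalIntegral.intervalIntegrable_rpow' (by linarith : (-1:ℝ) < a - 1))).const_mul _)
      ((aux_cont.mono Ioc_subset_Ioi_self).aestronglyMeasurable measurableSet_Ioc) ?_
    rw [ae_restrict_iff' measurableSet_Ioc]
    refine Eventually.of_forall fun t ht => ?_
    obtain ⟨ht0, ht1⟩ := ht
    rw [Real.norm_eq_abs, abs_of_nonneg (mul_nonneg (mul_nonneg (Real.exp_pos _).le
      (Real.rpow_nonneg ht0.le _)) (Real.rpow_nonneg (by linarith) _))]
    have h1 : Real.exp (-z*t) ≤ 1 := Real.exp_le_one_iff.mpr (by nlinarith)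
    have h2 : (1+t)^(b-a-1) ≤ (2:ℝ)^(|b|+2) := by
      calc (1+t)^(b-a-1) ≤ (1+t)^|b-a-1| :=
            Real.rpow_le_rpow_of_exponent_le (by linarith) (le_abs_self _)
        _ ≤ (2:ℝ)^|b-a-1| := Real.rpow_le_rpow (by linarith) (by linarith) (abs_nonneg _)
        _ ≤ (2:ℝ)^(|b|+2) := Real.rpow_le_rpow_of_exponent_le one_le_two habs
    calc Real.exp (-z*t) * t^(a-1) * (1+t)^(b-a-1)
        ≤ 1 * t^(a-1) * (2:ℝ)^(|b|+2) := by
          gcongr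
      _ = (2:ℝ)^(|b|+2) * t^(a-1) := by ring
  · refine Integrable.mono' (g := fun t => Real.exp (-z*t) * (1+t)^|b|) (aux_int1 hz |b|)
      ((aux_cont.mono (Ioi_subset_Ioi zero_le_one)).aestronglyMeasurable measurableSet_Ioi) ?_
    rw [ae_restrict_iff' measurableSet_Ioi]
    refine Eventually.of_forall fun t ht => ?_
    rw [mem_Ioi] at ht
    rw [Real.norm_eq_abs, abs_of_nonneg (mul_nonneg (mul_nonneg (Real.exp_pos _).le
      (Real.rpow_nonneg (by linarith) _)) (Real.rpow_nonneg (by linarith) _))]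
    have h1 : t^(a-1) ≤ 1 :=
      Real.rpow_le_one_of_one_le_of_nonpos (by linarith) (by linarith)
    have h2 : (1+t)^(b-a-1) ≤ (1+t)^|b| :=
      Real.rpow_le_rpow_of_exponent_le (by linarith) (by
        have := le_abs_self b; linarith)
    calc Real.exp (-z*t) * t^(a-1) * (1+t)^(b-a-1)
        ≤ Real.exp (-z*t) * 1 * (1+t)^|b| := by
          gcongr
      _ = Real.exp (-z*t) * (1+t)^|b| := by ring

open Set Asymptotics in
lemma aux_pointwise_small {z : ℝ} (hz : 0 < z) (b : ℝ) {a t : ℝ}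
    (ha : 0 < a) (ha2 : a ≤ 1/2) (ht0 : 0 < t) (ht1 : t ≤ 1) :
    |Real.exp (-z*t) * t^(a-1) * (1+t)^(b-a-1) - Real.exp (-t) * t^(a-1)| ≤
      (|b|+2) * Real.exp (|b|+2) + |1-z| * Real.exp |1-z| := by
  have hC : |b - a - 1| ≤ |b| + 2 := by
    have hb1 : -|b| ≤ b := neg_abs_le b
    have hb2 : b ≤ |b| := le_abs_self b
    rw [abs_le]; constructor <;> linarith
  have hlog0 : 0 ≤ Real.log (1+t) := Real.log_nonneg (by linarith)
  have hlog : Real.log (1+t) ≤ t := by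
    have := Real.log_le_sub_one_of_pos (show (0:ℝ) < 1+t by linarith)
    linarith
  have e1 : |(1+t)^(b-a-1) - 1| ≤ (|b|+2) * Real.exp (|b|+2) * t := by
    rw [Real.rpow_def_of_pos (by linarith), mul_comm (Real.log (1+t))]
    refine (aux_exp_sub_one _).trans ?_
    have habs : |(b-a-1) * Real.log (1+t)| ≤ (|b|+2) * t := by
      rw [abs_mul, abs_of_nonneg hlog0]
      exact mul_le_mul hC hlog hlog0 (by positivity)
    have habs2 : |(b-a-1) * Real.log (1+t)| ≤ |b|+2 := by
      refine habs.trans ?_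
      nlinarith [abs_nonneg b]
    calc |(b-a-1) * Real.log (1+t)| * Real.exp |(b-a-1) * Real.log (1+t)|
        ≤ ((|b|+2) * t) * Real.exp (|b|+2) := by
          exact mul_le_mul habs (Real.exp_le_exp.mpr habs2) (Real.exp_pos _).le (by positivity)
      _ = (|b|+2) * Real.exp (|b|+2) * t := by ring
  have e2 : |Real.exp (-z*t) - Real.exp (-t)| ≤ |1-z| * Real.exp |1-z| * t := by
    have hre : Real.exp (-z*t) - Real.exp (-t) = Real.exp (-t) * (Real.exp ((1-z)*t) - 1) := by
      rw [mul_sub, ← Real.exp_add, mul_one]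
      congr 2
      ring
    rw [hre, abs_mul, abs_of_nonneg (Real.exp_pos _).le]
    have h3 := aux_exp_sub_one ((1-z)*t)
    have h4 : |(1-z)*t| = |1 - z| * t := by rw [abs_mul, abs_of_nonneg ht0.le]
    have h5 : |1 - z| * t ≤ |1-z| := by nlinarith [abs_nonneg (1-z)]
    have h6 : Real.exp (-t) ≤ 1 := Real.exp_le_one_iff.mpr (by linarith)
    calc Real.exp (-t) * |Real.exp ((1-z)*t) - 1|
        ≤ 1 * ((|1 - z| * t) * Real.exp |1-z|) := by
          refine mul_le_mul h6 (h3.trans ?_) (abs_nonneg _) zero_le_one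
          rw [h4]
          exact mul_le_mul_of_nonneg_left (Real.exp_le_exp.mpr h5) (by positivity)
      _ = |1-z| * Real.exp |1-z| * t := by ring
  have key : Real.exp (-z*t) * t^(a-1) * (1+t)^(b-a-1) - Real.exp (-t) * t^(a-1)
      = t^(a-1) * (Real.exp (-z*t) * ((1+t)^(b-a-1) - 1) + (Real.exp (-z*t) - Real.exp (-t))) := by
    ring
  rw [key, abs_mul, abs_of_nonneg (Real.rpow_nonneg ht0.le _)]
  have hexp1 : Real.exp (-z*t) ≤ 1 := Real.exp_le_one_iff.mpr (by nlinarith)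
  set K := (|b|+2) * Real.exp (|b|+2) + |1-z| * Real.exp |1-z| with hK
  have hKpos : 0 ≤ K := by positivity
  have inner : |Real.exp (-z*t) * ((1+t)^(b-a-1) - 1) + (Real.exp (-z*t) - Real.exp (-t))|
      ≤ K * t := by
    refine (abs_add_le _ _).trans ?_
    rw [abs_mul, abs_of_nonneg (Real.exp_pos _).le, hK]
    have := mul_le_mul hexp1 e1 (abs_nonneg _) zero_le_one
    rw [one_mul] at this
    calc Real.exp (-z*t) * |(1+t)^(b-a-1) - 1| + |Real.exp (-z*t) - Real.exp (-t)|
        ≤ (|b|+2) * Real.exp (|b|+2) * t + |1-z| * Real.exp |1-z| * t := add_le_add this e2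
      _ = ((|b|+2) * Real.exp (|b|+2) + |1-z| * Real.exp |1-z|) * t := by ring
  calc t^(a-1) * |Real.exp (-z*t) * ((1+t)^(b-a-1) - 1) + (Real.exp (-z*t) - Real.exp (-t))|
      ≤ t^(a-1) * (K * t) := mul_le_mul_of_nonneg_left inner (Real.rpow_nonneg ht0.le _)
    _ = K * t^a := by
        rw [show t^(a-1) * (K * t) = K * (t^(a-1) * t^(1:ℝ)) by rw [Real.rpow_one]; ring,
          ← Real.rpow_add ht0]
        norm_num
    _ ≤ K * 1 := mul_le_mul_of_nonneg_left (Real.rpow_le_one ht0.le ht1 ha.le) hKpos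
    _ = K := mul_one K


open Set in
/-- for every `z > 0` and `b ∈ ℝ`, `lim_{a → 0⁺} Ψ(a, b; z) = 1`. -/
theorem stmt18 (z : ℝ) (hz : 0 < z) (b : ℝ) :
    Tendsto (fun a : ℝ => Psi a b z) (nhdsWithin 0 (Set.Ioi 0)) (nhds 1) := by
  set K := (|b|+2) * Real.exp (|b|+2) + |1-z| * Real.exp |1-z| with hKdef
  set M := K + ∫ t in Set.Ioi (1:ℝ), (Real.exp (-z*t) * (1+t)^|b| + Real.exp (-t)) with hMdef
  have hexpint : IntegrableOn (fun t : ℝ => Real.exp (-t)) (Set.Ioi 1) := by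
    have := exp_neg_integrableOn_Ioi 1 (zero_lt_one)
    simpa using this
  have hpsiint : IntegrableOn
      (fun t : ℝ => Real.exp (-z*t) * (1+t)^|b| + Real.exp (-t)) (Set.Ioi 1) :=
    (aux_int1 hz |b|).add hexpint
  -- main bound
  have hbound : ∀ a ∈ Set.Ioc (0:ℝ) (1/2), |uFun a b z - Real.Gamma a| ≤ M := by
    intro a ha
    obtain ⟨ha0, ha2⟩ := ha
    have hintf := aux_int_h hz b ha0 (ha2.trans (by norm_num))
    have hintg := Real.GammaIntegral_convergent ha0
    have hd : IntegrableOn (fun t : ℝ =>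
        Real.exp (-z*t) * t^(a-1) * (1+t)^(b-a-1) - Real.exp (-t) * t^(a-1)) (Set.Ioi 0) :=
      hintf.sub hintg
    have step1 : uFun a b z - Real.Gamma a
        = ∫ t in Set.Ioi (0:ℝ),
            (Real.exp (-z*t) * t^(a-1) * (1+t)^(b-a-1) - Real.exp (-t) * t^(a-1)) := by
      rw [Real.Gamma_eq_integral ha0, uFun, ← integral_sub hintf hintg]
    rw [step1]
    rw [← Real.norm_eq_abs]
    refine le_trans (norm_integral_le_integral_norm (μ := volume.restrict (Set.Ioi 0)) (fun t =>
      Real.exp (-z*t) * t^(a-1) * (1+t)^(b-a-1) - Real.exp (-t) * t^(a-1))) ?_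
    simp only [Real.norm_eq_abs]
    have hsplit : ∫ t in Set.Ioi (0:ℝ),
        |Real.exp (-z*t) * t^(a-1) * (1+t)^(b-a-1) - Real.exp (-t) * t^(a-1)|
        = (∫ t in Set.Ioc (0:ℝ) 1,
            |Real.exp (-z*t) * t^(a-1) * (1+t)^(b-a-1) - Real.exp (-t) * t^(a-1)|)
          + ∫ t in Set.Ioi (1:ℝ),
            |Real.exp (-z*t) * t^(a-1) * (1+t)^(b-a-1) - Real.exp (-t) * t^(a-1)| := by
      rw [← setIntegral_union (Ioc_disjoint_Ioi le_rfl) measurableSet_Ioi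
        (IntegrableOn.mono_set hd.abs Ioc_subset_Ioi_self) (IntegrableOn.mono_set hd.abs (Ioi_subset_Ioi zero_le_one)),
        Ioc_union_Ioi_eq_Ioi zero_le_one]
    rw [hsplit, hMdef]
    refine add_le_add ?_ ?_
    · calc (∫ t in Set.Ioc (0:ℝ) 1,
            |Real.exp (-z*t) * t^(a-1) * (1+t)^(b-a-1) - Real.exp (-t) * t^(a-1)|)
          ≤ ∫ _ in Set.Ioc (0:ℝ) 1, K := by
            refine setIntegral_mono_on (IntegrableOn.mono_set hd.abs Ioc_subset_Ioi_self) ?_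
              measurableSet_Ioc (fun t ht => aux_pointwise_small hz b ha0 ha2 ht.1 ht.2)
            exact integrableOn_const measure_Ioc_lt_top.ne
        _ = K := by simp
    · refine setIntegral_mono_on (IntegrableOn.mono_set hd.abs (Ioi_subset_Ioi zero_le_one)) hpsiint
        measurableSet_Ioi (fun t ht => ?_)
      rw [mem_Ioi] at ht
      refine (abs_sub _ _).trans (add_le_add ?_ ?_)
      · rw [abs_of_nonneg (mul_nonneg (mul_nonneg (Real.exp_pos _).le
          (Real.rpow_nonneg (by linarith) _)) (Real.rpow_nonneg (by linarith) _))]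
        have h1 : t^(a-1) ≤ 1 :=
          Real.rpow_le_one_of_one_le_of_nonpos (by linarith) (by linarith)
        have h2 : (1+t)^(b-a-1) ≤ (1+t)^|b| :=
          Real.rpow_le_rpow_of_exponent_le (by linarith) (by
            have := le_abs_self b; linarith)
        calc Real.exp (-z*t) * t^(a-1) * (1+t)^(b-a-1)
            ≤ Real.exp (-z*t) * 1 * (1+t)^|b| := by gcongr
          _ = Real.exp (-z*t) * (1+t)^|b| := by ring
      · rw [abs_of_nonneg (mul_nonneg (Real.exp_pos _).le (Real.rpow_nonneg (by linarith) _))]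
        have h1 : t^(a-1) ≤ 1 :=
          Real.rpow_le_one_of_one_le_of_nonpos (by linarith) (by linarith)
        calc Real.exp (-t) * t^(a-1) ≤ Real.exp (-t) * 1 := by gcongr
          _ = Real.exp (-t) := mul_one _
  -- Γ(a)⁻¹ → 0 as a → 0⁺
  have hGinv : Tendsto (fun a : ℝ => (Real.Gamma a)⁻¹) (nhdsWithin 0 (Set.Ioi 0)) (nhds 0) := by
    have hG1 : ContinuousAt Real.Gamma 1 := by
      refine (Real.differentiableAt_Gamma fun m => ?_).continuousAt
      have hm : (0:ℝ) ≤ m := Nat.cast_nonneg m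
      intro h
      linarith
    have h2 : Tendsto (fun a : ℝ => Real.Gamma (a+1)) (nhdsWithin 0 (Set.Ioi 0)) (nhds 1) := by
      have hadd : Tendsto (fun a : ℝ => a + 1) (nhdsWithin 0 (Set.Ioi 0)) (nhds 1) := by
        have h0 : Tendsto (fun a : ℝ => a + 1) (nhds 0) (nhds (0 + 1)) :=
          (continuous_id.add continuous_const).tendsto 0
        rw [zero_add] at h0
        exact h0.mono_left nhdsWithin_le_nhds
      have := hG1.tendsto.comp hadd
      simpa [Real.Gamma_one, Function.comp_def] using this
    have h3 : Tendsto (fun a : ℝ => a * (Real.Gamma (a+1))⁻¹)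
        (nhdsWithin 0 (Set.Ioi 0)) (nhds 0) := by
      have hida : Tendsto (fun a : ℝ => a) (nhdsWithin 0 (Set.Ioi 0)) (nhds 0) :=
        tendsto_id.mono_left nhdsWithin_le_nhds
      have := hida.mul (h2.inv₀ one_ne_zero)
      simpa using this
    refine h3.congr' ?_
    filter_upwards [self_mem_nhdsWithin] with a ha
    rw [mem_Ioi] at ha
    rw [Real.Gamma_add_one (ne_of_gt ha), mul_inv, ← mul_assoc,
      mul_inv_cancel₀ (ne_of_gt ha), one_mul]
  -- squeeze
  have keyabs : Tendsto (fun a : ℝ => |Psi a b z - 1|) (nhdsWithin 0 (Set.Ioi 0)) (nhds 0) := by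
    have hev : ∀ᶠ a in nhdsWithin (0:ℝ) (Set.Ioi 0), |Psi a b z - 1| ≤ (Real.Gamma a)⁻¹ * M := by
      have hhalf : ∀ᶠ a in nhdsWithin (0:ℝ) (Set.Ioi 0), a < 1/2 :=
        mem_nhdsWithin_of_mem_nhds (Iio_mem_nhds (by norm_num))
      filter_upwards [self_mem_nhdsWithin, hhalf] with a ha hh
      rw [mem_Ioi] at ha
      have hGpos : 0 < Real.Gamma a := Real.Gamma_pos_of_pos ha
      have hre : Psi a b z - 1 = (Real.Gamma a)⁻¹ * (uFun a b z - Real.Gamma a) := by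
        rw [Psi, mul_sub, inv_mul_cancel₀ hGpos.ne']
      rw [hre, abs_mul, abs_of_nonneg (inv_nonneg.mpr hGpos.le)]
      exact mul_le_mul_of_nonneg_left (hbound a ⟨ha, hh.le⟩) (inv_nonneg.mpr hGpos.le)
    have hM0 : Tendsto (fun a : ℝ => (Real.Gamma a)⁻¹ * M)
        (nhdsWithin 0 (Set.Ioi 0)) (nhds 0) := by
      have := hGinv.mul_const M
      simpa using this
    exact squeeze_zero' (Eventually.of_forall fun a => abs_nonneg _) hev hM0
  have hsub : Tendsto (fun a : ℝ => Psi a b z - 1) (nhdsWithin 0 (Set.Ioi 0)) (nhds 0) :=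
    (tendsto_zero_iff_abs_tendsto_zero _).mpr keyabs
  have := hsub.add (tendsto_const_nhds (x := (1:ℝ)))
  simpa using this
end
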